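/- arXiv:2104.13251 — 3 statements merged into one kernel-verified Lean document; each statement's English description precedes it below -/
import Mathlib

section
/- As formal power series identity: ∑_{(d₁,d₂) ∈ ℕ²} (-q^{1/2})^{-(d₁-d₂)²} / ((q^{-1};q^{-1})_{d₁} (q^{-1};q^{-1})_{d₂}) · t₁^{d₁} t₂^{d₂} equals the product Exp(q t₁t₂/(q-1)) · Exp(-q^{1/2} t₁/(q-1)) · Exp(-q^{1/2} t₂/(q-1)), where Exp is the plethystic exponential, i.e. Exp(∑_{d,k} c_{d,k} q^{k/2} t^d) = ∏_{d,k} (1 - q^{k/2} t^d)^{-c_{d,k}}. -/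
open scoped LaurentSeries Multiplicative WithZero

/-- Pi (coefficient-wise) topology on power series in `t₁, t₂` over the Laurent series
field `ℚ⸨u⸩`, where `u = q^{-1/2}` carries its `u`-adic (valued) topology. -/
noncomputable instance : TopologicalSpace (MvPowerSeries (Fin 2) (LaurentSeries ℚ)) :=
  inferInstanceAs (TopologicalSpace ((Fin 2 →₀ ℕ) → LaurentSeries ℚ))

/-- `u = q^{-1/2}` in the Laurent series field. -/
noncomputable def uL : LaurentSeries ℚ := ((PowerSeries.X : PowerSeries ℚ) : LaurentSeries ℚ)

/-- `q^{1/2} = u⁻¹`. -/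
noncomputable def qh : LaurentSeries ℚ := uL⁻¹

/-- `(q^{-1}; q^{-1})_m = ∏_{i=1}^m (1 - q^{-i})`, with `q^{-i} = u^{2i}`. -/
noncomputable def pochInv (m : ℕ) : LaurentSeries ℚ :=
  ∏ i ∈ Finset.range m, (1 - uL ^ (2 * (i + 1)))

namespace C2Aux

open Filter MvPowerSeries

abbrev K := LaurentSeries ℚ
abbrev R2 := MvPowerSeries (Fin 2) K

lemma v_uL : Valued.v uL = ((Multiplicative.ofAdd (-1 : ℤ) : Multiplicative ℤ) : ℤᵐ⁰) := by
  have := LaurentSeries.valuation_X_pow (K := ℚ) 1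
  rw [pow_one] at this
  exact this

lemma v_uL_lt_one : Valued.v uL < 1 := by
  rw [v_uL, ← WithZero.coe_one]
  exact_mod_cast Multiplicative.ofAdd_lt.mpr (by decide)

lemma v_uL_le_one : Valued.v uL ≤ 1 := le_of_lt v_uL_lt_one

lemma v_uL_ne_zero : Valued.v uL ≠ 0 := by rw [v_uL]; exact WithZero.coe_ne_zero

lemma uL_ne_zero : uL ≠ 0 := fun h => v_uL_ne_zero (by rw [h, map_zero])

/-- `x` is divisible by `u^N` in the valuation sense. -/
def VN (N : ℕ) (x : K) : Prop := Valued.v x ≤ Valued.v uL ^ N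

lemma VN_zero (N : ℕ) : VN N (0 : K) := by
  simp [VN, pow_ne_zero _ v_uL_ne_zero, zero_le']

lemma VN_anti {N M : ℕ} (h : M ≤ N) {x : K} (hx : VN N x) : VN M x := by
  refine hx.trans ?_
  calc Valued.v uL ^ N = Valued.v uL ^ (N - M) * Valued.v uL ^ M := by
        rw [← pow_add]; congr 1; omega
    _ ≤ 1 * Valued.v uL ^ M := by
        gcongr
        exact pow_le_one' v_uL_le_one _
    _ = Valued.v uL ^ M := one_mul _

lemma VN_add {N : ℕ} {x y : K} (hx : VN N x) (hy : VN N y) : VN N (x + y) :=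
  le_trans (Valued.v.map_add x y) (max_le hx hy)

lemma VN_neg {N : ℕ} {x : K} (hx : VN N x) : VN N (-x) := by
  simpa [VN] using hx

lemma VN_sub {N : ℕ} {x y : K} (hx : VN N x) (hy : VN N y) : VN N (x - y) := by
  rw [sub_eq_add_neg]; exact VN_add hx (VN_neg hy)

lemma VN_mul {N M : ℕ} {x y : K} (hx : VN N x) (hy : VN M y) : VN (N + M) (x * y) := by
  rw [VN, Valued.v.map_mul, pow_add]
  exact mul_le_mul' hx hy

lemma VN_pow_uL {N k : ℕ} (h : N ≤ k) : VN N (uL ^ k) := by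
  have : VN k (uL ^ k) := by rw [VN, Valued.v.map_pow]
  exact VN_anti h this

lemma VN_one : VN 0 (1 : K) := by rw [VN, pow_zero, Valued.v.map_one]

lemma exists_pow_lt (γ : ℤᵐ⁰ˣ) : ∃ N : ℕ, Valued.v uL ^ N < (γ : ℤᵐ⁰) := by
  obtain ⟨m, hm⟩ : ∃ m : Multiplicative ℤ, (γ : ℤᵐ⁰) = m :=
    WithZero.ne_zero_iff_exists.mp γ.ne_zero |>.imp fun m h => h.symm
  refine ⟨((- Multiplicative.toAdd m).toNat + 1), ?_⟩
  rw [v_uL, hm, ← WithZero.coe_pow, WithZero.coe_lt_coe, ← ofAdd_nsmul]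
  rw [show m = Multiplicative.ofAdd (Multiplicative.toAdd m) from rfl, Multiplicative.ofAdd_lt]
  rw [nsmul_eq_mul, toAdd_ofAdd]
  push_cast
  omega

lemma exists_pow_lt' (γ : (MonoidWithZeroHom.ValueGroup₀
    (.ofClass (Valued.v : Valuation K ℤᵐ⁰)))ˣ) :
    ∃ N : ℕ, ∀ x : K, Valued.v x ≤ Valued.v uL ^ N → Valued.v.restrict x < γ.1 := by
  have hne : MonoidWithZeroHom.ValueGroup₀.embedding γ.1 ≠ 0 := fun h =>
    γ.ne_zero (MonoidWithZeroHom.ValueGroup₀.embedding_injective (h.trans (map_zero _).symm))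
  obtain ⟨N, hN⟩ := exists_pow_lt (Units.mk0 _ hne)
  exact ⟨N, fun x hx => (Valuation.restrict_lt_iff_lt_embedding _).mpr (lt_of_le_of_lt hx hN)⟩

lemma tendsto_of_VN {ι : Type*} {F : Filter ι} {g : ι → K} {L : K}
    (h : ∀ N : ℕ, ∀ᶠ i in F, VN N (g i - L)) : Tendsto g F (nhds L) := by
  rw [Filter.tendsto_def]
  intro s hs
  obtain ⟨γ, hγ⟩ := Valued.mem_nhds.mp hs
  obtain ⟨N, hN⟩ := exists_pow_lt' γ
  filter_upwards [h N] with i hi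
  exact hγ (hN _ hi)

end C2Aux

section Part2
namespace C2Aux
open Filter MvPowerSeries

/-- All coefficients of `φ` divisible by `u^N`. -/
def VR (N : ℕ) (φ : R2) : Prop := ∀ n, VN N (coeff n φ)

lemma VR_one : VR 0 (1 : R2) := by
  intro n
  rw [coeff_one]
  split_ifs
  · exact VN_one
  · exact VN_zero 0

lemma VR_zero (N : ℕ) : VR N (0 : R2) := fun n => by
  rw [map_zero]; exact VN_zero N

lemma VR_anti {N M : ℕ} (h : M ≤ N) {φ : R2} (hφ : VR N φ) : VR M φ :=
  fun n => VN_anti h (hφ n)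

lemma VR_add {N : ℕ} {φ ψ : R2} (hφ : VR N φ) (hψ : VR N ψ) : VR N (φ + ψ) :=
  fun n => by rw [map_add]; exact VN_add (hφ n) (hψ n)

lemma VR_sub {N : ℕ} {φ ψ : R2} (hφ : VR N φ) (hψ : VR N ψ) : VR N (φ - ψ) :=
  fun n => by rw [map_sub]; exact VN_sub (hφ n) (hψ n)

lemma VR_mul {N M : ℕ} {φ ψ : R2} (hφ : VR N φ) (hψ : VR M ψ) : VR (N + M) (φ * ψ) := by
  intro n
  rw [coeff_mul]
  show Valued.v _ ≤ _
  apply Valued.v.map_sum_le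
  intro p _
  exact VN_mul (hφ p.1) (hψ p.2)

section Products

variable {F : ℕ → R2} (hI : ∀ j, VR 0 (F j)) (hO : ∀ j, VR j (F j - 1))

include hI in
lemma VR_prod (s : Finset ℕ) : VR 0 (∏ j ∈ s, F j) := by
  classical
  induction s using Finset.induction_on with
  | empty => simpa using VR_one
  | insert _ _ hx ih =>
    rw [Finset.prod_insert hx]
    simpa using VR_mul (hI _) ih

include hI hO in
lemma VR_tail (N : ℕ) : ∀ s : Finset ℕ, (∀ j ∈ s, N ≤ j) → VR N ((∏ j ∈ s, F j) - 1) := by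
  classical
  intro s
  induction s using Finset.induction_on with
  | empty => intro _; simpa using VR_zero N
  | @insert a s hx ih =>
    intro hmem
    rw [Finset.prod_insert hx]
    have h1 : VR N ((∏ j ∈ s, F j) - 1) := ih fun j hj => hmem j (Finset.mem_insert_of_mem hj)
    have h2 : VR N (F a - 1) := VR_anti (hmem a (Finset.mem_insert_self a s)) (hO a)
    have : F a * ∏ j ∈ s, F j - 1 = F a * ((∏ j ∈ s, F j) - 1) + (F a - 1) := by ring
    rw [this]
    exact VR_add (by simpa using VR_mul (hI a) h1) h2

include hI hO in
lemma VR_prod_diff_range (N : ℕ) {s : Finset ℕ} (hs : Finset.range N ⊆ s) :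
    VR N ((∏ j ∈ s, F j) - ∏ j ∈ Finset.range N, F j) := by
  classical
  have hsd := Finset.prod_sdiff (f := F) hs
  have : (∏ j ∈ s, F j) - ∏ j ∈ Finset.range N, F j
      = ((∏ j ∈ s \ Finset.range N, F j) - 1) * ∏ j ∈ Finset.range N, F j := by
    rw [sub_mul, hsd, one_mul]
  rw [this]
  have htail : VR N ((∏ j ∈ s \ Finset.range N, F j) - 1) := by
    apply VR_tail hI hO
    intro j hj
    have := Finset.mem_sdiff.mp hj
    simpa using (by simpa using this.2 : ¬ j < N)
  simpa using VR_mul htail (VR_prod hI (Finset.range N))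

include hI hO in
lemma VR_prod_diff (N : ℕ) {s t : Finset ℕ} (hs : Finset.range N ⊆ s)
    (ht : Finset.range N ⊆ t) :
    VR N ((∏ j ∈ t, F j) - ∏ j ∈ s, F j) := by
  have h1 := VR_prod_diff_range hI hO N hs
  have h2 := VR_prod_diff_range hI hO N ht
  have : (∏ j ∈ t, F j) - ∏ j ∈ s, F j
      = ((∏ j ∈ t, F j) - ∏ j ∈ Finset.range N, F j)
        - ((∏ j ∈ s, F j) - ∏ j ∈ Finset.range N, F j) := by ring
  rw [this]
  exact VR_sub h2 h1

/-- The coefficientwise limit of the partial products. -/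
noncomputable def PL (F : ℕ → R2) : R2 :=
  fun n => limUnder atTop (fun s : Finset ℕ => coeff n (∏ j ∈ s, F j))

include hI hO in
lemma hasProd_PL : HasProd F (PL F) := by
  have key : ∀ n, Tendsto (fun s : Finset ℕ => coeff n (∏ j ∈ s, F j)) atTop
      (nhds (PL F n)) := by
    intro n
    have hc : CauchySeq (fun s : Finset ℕ => coeff n (∏ j ∈ s, F j)) := by
      rw [(Valued.hasBasis_uniformity K ℤᵐ⁰).cauchySeq_iff]
      rintro γ -
      obtain ⟨N, hN⟩ := exists_pow_lt' γ
      refine ⟨Finset.range N, fun t ht s hs => ?_⟩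
      have hd := VR_prod_diff hI hO N (Finset.le_iff_subset.mp ht) (Finset.le_iff_subset.mp hs)
      show Valued.v.restrict ((coeff n) (∏ j ∈ s, F j) - (coeff n) (∏ j ∈ t, F j)) < γ.1
      rw [← map_sub]
      exact hN _ (hd n)
    exact hc.tendsto_limUnder
  exact tendsto_pi_nhds.mpr key

include hI hO in
lemma tendsto_range_prod :
    Tendsto (fun N => ∏ j ∈ Finset.range N, F j) atTop (nhds (PL F)) :=
  (hasProd_PL hI hO).comp tendsto_finset_range

end Products

instance : T2Space R2 := inferInstanceAs (T2Space ((Fin 2 →₀ ℕ) → K))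

lemma tendsto_coeff {ι : Type*} {l : Filter ι} {x : ι → R2} {L : R2}
    (h : Tendsto x l (nhds L)) (n : Fin 2 →₀ ℕ) :
    Tendsto (fun i => coeff n (x i)) l (nhds (coeff n L)) :=
  tendsto_pi_nhds.mp h n

lemma tendsto_mul_const {ι : Type*} {l : Filter ι} {x : ι → R2} {L : R2} (c : R2)
    (h : Tendsto x l (nhds L)) : Tendsto (fun i => c * x i) l (nhds (c * L)) := by
  classical
  apply tendsto_pi_nhds.mpr
  intro n
  show Tendsto (fun i => coeff n (c * x i)) l (nhds (coeff n (c * L)))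
  simp only [coeff_mul]
  exact tendsto_finset_sum _ fun p _ => ((tendsto_coeff h p.2).const_mul _)

/-- `w = u² = q⁻¹`. -/
noncomputable def w : K := uL ^ 2

/-- Rescaling `X s ↦ w · X s`. -/
noncomputable def sig (s : Fin 2) (φ : R2) : R2 := fun n => w ^ (n s) * coeff n φ

lemma coeff_sig (s : Fin 2) (n : Fin 2 →₀ ℕ) (φ : R2) :
    coeff n (sig s φ) = w ^ (n s) * coeff n φ := rfl

lemma sig_mul (s : Fin 2) (φ ψ : R2) : sig s (φ * ψ) = sig s φ * sig s ψ := by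
  classical
  apply MvPowerSeries.ext
  intro n
  rw [coeff_sig, coeff_mul, coeff_mul, Finset.mul_sum]
  apply Finset.sum_congr rfl
  intro p hp
  rw [Finset.HasAntidiagonal.mem_antidiagonal] at hp
  rw [coeff_sig, coeff_sig]
  have hps : p.1 s + p.2 s = n s := by rw [← hp, Finsupp.add_apply]
  rw [← hps, pow_add]; ring

lemma tendsto_sig {ι : Type*} {l : Filter ι} {x : ι → R2} {L : R2} (s : Fin 2)
    (h : Tendsto x l (nhds L)) : Tendsto (fun i => sig s (x i)) l (nhds (sig s L)) := by
  apply tendsto_pi_nhds.mpr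
  intro n
  exact (tendsto_coeff h n).const_mul _

section FixedPoint

variable {F : ℕ → R2} (hI : ∀ j, VR 0 (F j)) (hO : ∀ j, VR j (F j - 1))

include hI hO in
lemma PL_fixed (Φ : R2 → R2)
    (hc : ∀ {x : ℕ → R2} {L : R2}, Tendsto x atTop (nhds L) →
      Tendsto (fun N => Φ (x N)) atTop (nhds (Φ L)))
    (he : ∀ N, ∏ j ∈ Finset.range (N + 1), F j = Φ (∏ j ∈ Finset.range N, F j)) :
    PL F = Φ (PL F) := by
  have h1 := tendsto_range_prod hI hO
  have h2 : Tendsto (fun N => ∏ j ∈ Finset.range (N + 1), F j) atTop (nhds (PL F)) :=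
    h1.comp (tendsto_add_atTop_nat 1)
  have h3 := hc h1
  simp only [he] at h2
  exact tendsto_nhds_unique h2 h3

end FixedPoint

end C2Aux
end Part2

section Part3
namespace C2Aux
open Filter MvPowerSeries Finsupp

lemma fin2_ext {n m : Fin 2 →₀ ℕ} (h0 : n 0 = m 0) (h1 : n 1 = m 1) : n = m := by
  ext i
  fin_cases i
  · exact h0
  · exact h1

lemma eq_zero_of_apply {n : Fin 2 →₀ ℕ} (h0 : n 0 = 0) (h1 : n 1 = 0) : n = 0 :=
  fin2_ext (by simpa using h0) (by simpa using h1)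

/-- the pair monomial exponent -/
noncomputable def pr (a b : ℕ) : Fin 2 →₀ ℕ := Finsupp.single 0 a + Finsupp.single 1 b

@[simp] lemma pr_apply0 (a b : ℕ) : pr a b 0 = a := by
  simp [pr, Finsupp.single_apply]

@[simp] lemma pr_apply1 (a b : ℕ) : pr a b 1 = b := by
  simp [pr, Finsupp.single_apply]

lemma pr_eta (n : Fin 2 →₀ ℕ) : pr (n 0) (n 1) = n :=
  fin2_ext (by simp) (by simp)

lemma pr_eq_iff {a b : ℕ} {n : Fin 2 →₀ ℕ} : pr a b = n ↔ a = n 0 ∧ b = n 1 := by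
  constructor
  · rintro rfl; simp
  · rintro ⟨rfl, rfl⟩; exact pr_eta n

/-- the other index -/
def os : Fin 2 → Fin 2 := fun s => if s = 0 then 1 else 0

lemma os_ne (s : Fin 2) : os s ≠ s := by fin_cases s <;> decide

@[simp] lemma single_apply_os (s : Fin 2) (k : ℕ) : (Finsupp.single s k) (os s) = 0 :=
  Finsupp.single_eq_of_ne' (os_ne s).symm

/-- The factors `1 - u^{2j+1) X s`. -/
noncomputable def FB (s : Fin 2) (j : ℕ) : R2 :=
  1 - MvPowerSeries.C (uL ^ (2 * j + 1)) * MvPowerSeries.X s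

lemma C_mul_X (c : K) (s : Fin 2) :
    MvPowerSeries.C c * MvPowerSeries.X s = monomial (Finsupp.single s 1) c := by
  rw [X_def, ← smul_eq_C_mul, ← map_smul, smul_eq_mul, mul_one]

lemma FB_eq (s : Fin 2) (j : ℕ) :
    FB s j = 1 - monomial (Finsupp.single s 1) (uL ^ (2 * j + 1)) := by
  rw [FB, C_mul_X]

lemma coeff_FB (s : Fin 2) (j : ℕ) (n : Fin 2 →₀ ℕ) :
    coeff n (FB s j) = (if n = 0 then 1 else 0)
      - (if n = Finsupp.single s 1 then uL ^ (2 * j + 1) else 0) := by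
  rw [FB_eq, map_sub, coeff_one, coeff_monomial]

/-- The geometric factors `(1 - u^{2j} X0 X1)⁻¹` as explicit series. -/
noncomputable def G (j : ℕ) : R2 := fun n => if n 0 = n 1 then w ^ (j * n 0) else 0

lemma coeff_G (j : ℕ) (n : Fin 2 →₀ ℕ) :
    coeff n (G j) = if n 0 = n 1 then w ^ (j * n 0) else 0 := rfl

lemma w_pow (k : ℕ) : w ^ k = uL ^ (2 * k) := by
  rw [w, ← pow_mul, mul_comm]

lemma VN_w_pow {N k : ℕ} (h : N ≤ 2 * k) : VN N (w ^ k) := by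
  rw [w_pow]; exact VN_pow_uL h

lemma hI_FB (s : Fin 2) (j : ℕ) : VR 0 (FB s j) := by
  intro n
  rw [coeff_FB]
  have h1 : (0 : Fin 2 →₀ ℕ) ≠ Finsupp.single s 1 :=
    fun h => one_ne_zero (Finsupp.single_eq_zero.mp h.symm)
  split_ifs with h h' h'
  · subst h; exact absurd h' h1
  · simpa using VN_one
  · simpa using VN_neg (VN_pow_uL (Nat.zero_le _))
  · simpa using VN_zero 0

lemma hO_FB (s : Fin 2) (j : ℕ) : VR j (FB s j - 1) := by
  intro n
  rw [map_sub, coeff_FB, coeff_one]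
  have : (if n = 0 then (1:K) else 0) - (if n = Finsupp.single s 1 then uL ^ (2*j+1) else 0)
      - (if n = 0 then 1 else 0) = -(if n = Finsupp.single s 1 then uL ^ (2*j+1) else 0) := by
    ring
  rw [this]
  split_ifs
  · exact VN_neg (VN_pow_uL (by omega))
  · simpa using VN_zero j

lemma hI_G (j : ℕ) : VR 0 (G j) := by
  intro n
  rw [coeff_G]
  split_ifs
  · exact VN_w_pow (Nat.zero_le _)
  · exact VN_zero 0

lemma hO_G (j : ℕ) : VR j (G j - 1) := by
  intro n
  rw [map_sub, coeff_G, coeff_one]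
  by_cases h0 : n = 0
  · subst h0
    simpa using VN_zero j
  · rw [if_neg h0, sub_zero]
    split_ifs with h
    · have hn0 : 1 ≤ n 0 := by
        by_contra hc
        push_neg at hc
        have hz : n 0 = 0 := by omega
        exact h0 (eq_zero_of_apply hz (by rw [← h]; exact hz))
      exact VN_w_pow (by nlinarith)
    · exact VN_zero j
end C2Aux
end Part3

section Part4
namespace C2Aux
open Filter MvPowerSeries Finsupp

lemma sig_one (s : Fin 2) : sig s (1 : R2) = 1 := by
  apply MvPowerSeries.ext; intro n
  rw [coeff_sig, coeff_one]
  split_ifs with h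
  · subst h; simp
  · simp

noncomputable def sigM (s : Fin 2) : R2 →* R2 :=
  { toFun := sig s, map_one' := sig_one s, map_mul' := sig_mul s }

lemma single_ne_zero' (s : Fin 2) : (0 : Fin 2 →₀ ℕ) ≠ Finsupp.single s 1 :=
  fun h => one_ne_zero (Finsupp.single_eq_zero.mp h.symm)

lemma sig_FB (s : Fin 2) (j : ℕ) : sig s (FB s j) = FB s (j + 1) := by
  apply MvPowerSeries.ext; intro n
  rw [coeff_sig, coeff_FB, coeff_FB]
  split_ifs with h0 h1 h1
  · exact absurd (h0 ▸ h1) (single_ne_zero' s)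
  · subst h0; simp
  · subst h1
    rw [Finsupp.single_eq_same, w]
    ring
  · simp

lemma sig_G (j : ℕ) : sig 0 (G j) = G (j + 1) := by
  apply MvPowerSeries.ext; intro n
  rw [coeff_sig, coeff_G, coeff_G]
  split_ifs with h
  · rw [← pow_add]; congr 1; ring
  · simp

lemma prod_FB_succ (s : Fin 2) (N : ℕ) :
    ∏ j ∈ Finset.range (N + 1), FB s j
      = FB s 0 * sig s (∏ j ∈ Finset.range N, FB s j) := by
  rw [Finset.prod_range_succ']
  rw [show sig s (∏ j ∈ Finset.range N, FB s j)
      = ∏ j ∈ Finset.range N, sig s (FB s j) from map_prod (sigM s) _ _]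
  simp_rw [sig_FB]
  rw [mul_comm]

lemma prod_G_succ (N : ℕ) :
    ∏ j ∈ Finset.range (N + 1), G j = G 0 * sig 0 (∏ j ∈ Finset.range N, G j) := by
  rw [Finset.prod_range_succ']
  rw [show sig 0 (∏ j ∈ Finset.range N, G j)
      = ∏ j ∈ Finset.range N, sig 0 (G j) from map_prod (sigM 0) _ _]
  simp_rw [sig_G]
  rw [mul_comm]

/-- The limit of the `FB s` products. -/
noncomputable def PB (s : Fin 2) : R2 := PL (FB s)
/-- The limit of the geometric products. -/
noncomputable def PA : R2 := PL G

lemma hasProd_FB (s : Fin 2) : HasProd (FB s) (PB s) := hasProd_PL (hI_FB s) (hO_FB s)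
lemma hasProd_G : HasProd G PA := hasProd_PL hI_G hO_G

lemma PB_fixed (s : Fin 2) : PB s = FB s 0 * sig s (PB s) :=
  PL_fixed (hI_FB s) (hO_FB s) (fun y => FB s 0 * sig s y)
    (fun h => tendsto_mul_const _ (tendsto_sig s h)) (prod_FB_succ s)

lemma PA_fixed : PA = G 0 * sig 0 PA :=
  PL_fixed hI_G hO_G (fun y => G 0 * sig 0 y)
    (fun h => tendsto_mul_const _ (tendsto_sig 0 h)) prod_G_succ

/-- coefficientwise evaluation of `PL` from constant partial products. -/
lemma coeff_PL_of_const {F : ℕ → R2} (hI : ∀ j, VR 0 (F j)) (hO : ∀ j, VR j (F j - 1))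
    {n : Fin 2 →₀ ℕ} {c : K} (h : ∀ N : Finset ℕ, coeff n (∏ j ∈ N, F j) = c) :
    coeff n (PL F) = c := by
  have h1 := tendsto_coeff (tendsto_range_prod hI hO) n
  simp only [h] at h1
  exact tendsto_nhds_unique h1 tendsto_const_nhds

lemma coeff_zero_prod {F : ℕ → R2} (h : ∀ j, coeff 0 (F j) = 1) (t : Finset ℕ) :
    coeff 0 (∏ j ∈ t, F j) = 1 := by
  rw [coeff_zero_eq_constantCoeff_apply, map_prod]
  apply Finset.prod_eq_one
  intro j _
  rw [← coeff_zero_eq_constantCoeff_apply, h]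

lemma coeff_zero_FB (s : Fin 2) (j : ℕ) : coeff 0 (FB s j) = 1 := by
  rw [coeff_FB, if_pos rfl, if_neg (single_ne_zero' s), sub_zero]

lemma coeff_zero_G (j : ℕ) : coeff 0 (G j) = 1 := by
  rw [coeff_G, if_pos (by simp)]
  simp

lemma coeff_zero_PB (s : Fin 2) : coeff 0 (PB s) = 1 :=
  coeff_PL_of_const (hI_FB s) (hO_FB s) (coeff_zero_prod (coeff_zero_FB s))

lemma coeff_zero_PA : coeff 0 PA = 1 :=
  coeff_PL_of_const hI_G hO_G (coeff_zero_prod coeff_zero_G)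

/-- support of the `B`-products : only powers of `X s`. -/
def SuppB (s : Fin 2) (φ : R2) : Prop := ∀ n : Fin 2 →₀ ℕ, n (os s) ≠ 0 → coeff n φ = 0

lemma SuppB_one (s : Fin 2) : SuppB s 1 := by
  intro n hn
  rw [coeff_one, if_neg]
  intro h; subst h; simp at hn

lemma SuppB_mul {s : Fin 2} {φ ψ : R2} (hφ : SuppB s φ) (hψ : SuppB s ψ) :
    SuppB s (φ * ψ) := by
  classical
  intro n hn
  rw [coeff_mul]
  apply Finset.sum_eq_zero
  intro p hp
  rw [Finset.HasAntidiagonal.mem_antidiagonal] at hp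
  have hsum : p.1 (os s) + p.2 (os s) = n (os s) := by rw [← hp, Finsupp.add_apply]
  rcases (by omega : p.1 (os s) ≠ 0 ∨ p.2 (os s) ≠ 0) with h | h
  · rw [hφ _ h, zero_mul]
  · rw [hψ _ h, mul_zero]

lemma SuppB_FB (s : Fin 2) (j : ℕ) : SuppB s (FB s j) := by
  intro n hn
  rw [coeff_FB, if_neg, if_neg, sub_zero]
  · intro h; subst h; simp at hn
  · intro h; subst h; simp at hn

lemma SuppB_prod (s : Fin 2) (t : Finset ℕ) : SuppB s (∏ j ∈ t, FB s j) := by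
  classical
  induction t using Finset.induction_on with
  | empty => simpa using SuppB_one s
  | insert _ _ hx ih =>
    rw [Finset.prod_insert hx]
    exact SuppB_mul (SuppB_FB s _) ih

lemma SuppB_PB (s : Fin 2) : SuppB s (PB s) := by
  intro n hn
  exact coeff_PL_of_const (hI_FB s) (hO_FB s) (fun t => SuppB_prod s t n hn)

/-- diagonal support for the geometric products. -/
def SuppD (φ : R2) : Prop := ∀ n : Fin 2 →₀ ℕ, n 0 ≠ n 1 → coeff n φ = 0

lemma SuppD_one : SuppD 1 := by
  intro n hn
  rw [coeff_one, if_neg]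
  intro h; subst h; simp at hn

lemma SuppD_mul {φ ψ : R2} (hφ : SuppD φ) (hψ : SuppD ψ) : SuppD (φ * ψ) := by
  classical
  intro n hn
  rw [coeff_mul]
  apply Finset.sum_eq_zero
  intro p hp
  rw [Finset.HasAntidiagonal.mem_antidiagonal] at hp
  have h0 : p.1 0 + p.2 0 = n 0 := by rw [← hp, Finsupp.add_apply]
  have h1 : p.1 1 + p.2 1 = n 1 := by rw [← hp, Finsupp.add_apply]
  rcases (by omega : p.1 0 ≠ p.1 1 ∨ p.2 0 ≠ p.2 1) with h | h
  · rw [hφ _ h, zero_mul]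
  · rw [hψ _ h, mul_zero]

lemma SuppD_G (j : ℕ) : SuppD (G j) := by
  intro n hn
  rw [coeff_G, if_neg hn]

lemma SuppD_prod (t : Finset ℕ) : SuppD (∏ j ∈ t, G j) := by
  classical
  induction t using Finset.induction_on with
  | empty => simpa using SuppD_one
  | insert _ _ hx ih =>
    rw [Finset.prod_insert hx]
    exact SuppD_mul (SuppD_G _) ih

lemma SuppD_PA : SuppD PA := by
  intro n hn
  exact coeff_PL_of_const hI_G hO_G (fun t => SuppD_prod t n hn)

end C2Aux
end Part4

section Part5
namespace C2Aux
open Filter MvPowerSeries Finsupp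

lemma one_sub_uL_pow_ne {k : ℕ} (hk : 1 ≤ k) : (1 : K) - uL ^ k ≠ 0 := by
  intro h
  have h1 : (uL : K) ^ k = 1 := (sub_eq_zero.mp h).symm
  have hv : Valued.v ((uL : K) ^ k) < 1 :=
    lt_of_le_of_lt (VN_pow_uL hk) (by rw [pow_one]; exact v_uL_lt_one)
  rw [h1, Valued.v.map_one] at hv
  exact lt_irrefl _ hv

lemma pochInv_zero : pochInv 0 = 1 := Finset.prod_range_zero _

lemma pochInv_succ (m : ℕ) : pochInv (m + 1) = pochInv m * (1 - uL ^ (2 * (m + 1))) :=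
  Finset.prod_range_succ _ _

lemma pochInv_ne (m : ℕ) : pochInv m ≠ 0 := by
  rw [pochInv]
  apply Finset.prod_ne_zero_iff.mpr
  intro i _
  exact one_sub_uL_pow_ne (by omega)

lemma single_sub_single (s : Fin 2) (a : ℕ) :
    Finsupp.single s (a + 1) - Finsupp.single s 1 = Finsupp.single s a := by
  ext x
  rw [Finsupp.tsub_apply]
  rcases eq_or_ne s x with rfl | h
  · simp
  · simp [Finsupp.single_eq_of_ne' h]

lemma coeff_FB0_mul (s : Fin 2) (y : R2) (n : Fin 2 →₀ ℕ) :
    coeff n (FB s 0 * y) = coeff n y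
      - (if Finsupp.single s 1 ≤ n then uL ^ (2 * 0 + 1) * coeff (n - Finsupp.single s 1) y
          else 0) := by
  rw [FB_eq, sub_mul, one_mul, map_sub, coeff_monomial_mul]

lemma pb_rec (s : Fin 2) (a : ℕ) :
    coeff (Finsupp.single s (a + 1)) (PB s) * (1 - w ^ (a + 1))
      = -(uL * w ^ a * coeff (Finsupp.single s a) (PB s)) := by
  have h := congrArg (fun φ => coeff (Finsupp.single s (a + 1)) φ) (PB_fixed s)
  rw [coeff_FB0_mul,
    if_pos (Finsupp.single_le_iff.mpr (by rw [Finsupp.single_eq_same]; omega)),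
    single_sub_single, coeff_sig, coeff_sig, Finsupp.single_eq_same,
    Finsupp.single_eq_same] at h
  rw [pow_one] at h
  linear_combination h

lemma pb_formula (s : Fin 2) (a : ℕ) :
    coeff (Finsupp.single s a) (PB s) = (-1) ^ a * uL ^ (a * a) * (pochInv a)⁻¹ := by
  induction a with
  | zero =>
    rw [Finsupp.single_zero, coeff_zero_PB, pochInv_zero]
    simp
  | succ a ih =>
    have hrec := pb_rec s a
    rw [ih] at hrec
    have hd : (1 : K) - w ^ (a + 1) ≠ 0 := by
      rw [w_pow]; exact one_sub_uL_pow_ne (by omega)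
    have hPa := pochInv_ne a
    have h2 : ((1 : K) - uL ^ (2 * (a + 1))) ≠ 0 := one_sub_uL_pow_ne (by omega)
    have key : coeff (Finsupp.single s (a + 1)) (PB s) * (pochInv a * (1 - uL ^ (2 * (a + 1))))
        = (-1) ^ (a + 1) * uL ^ ((a + 1) * (a + 1)) := by
      calc coeff (Finsupp.single s (a + 1)) (PB s) * (pochInv a * (1 - uL ^ (2 * (a + 1))))
          = (coeff (Finsupp.single s (a + 1)) (PB s) * (1 - w ^ (a + 1))) * pochInv a := by
            rw [w_pow]; ring
        _ = -(uL * w ^ a * ((-1) ^ a * uL ^ (a * a) * (pochInv a)⁻¹)) * pochInv a := by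
            rw [hrec]
        _ = -(uL * w ^ a * (-1) ^ a * uL ^ (a * a)) * ((pochInv a)⁻¹ * pochInv a) := by ring
        _ = (-1) ^ (a + 1) * uL ^ ((a + 1) * (a + 1)) := by
            rw [inv_mul_cancel₀ hPa, mul_one, w_pow]; ring
    rw [pochInv_succ]
    exact (eq_mul_inv_iff_mul_eq₀ (mul_ne_zero hPa h2)).mpr key

lemma pr_zero : pr 0 0 = 0 := by simp [pr]

lemma pr_le_iff {a b : ℕ} {n : Fin 2 →₀ ℕ} : pr a b ≤ n ↔ a ≤ n 0 ∧ b ≤ n 1 := by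
  rw [Finsupp.le_def]
  constructor
  · intro h
    exact ⟨by simpa using h 0, by simpa using h 1⟩
  · rintro ⟨h0, h1⟩ x
    fin_cases x
    · simpa using h0
    · simpa using h1

lemma pr_sub_pr (a b c d : ℕ) : pr a b - pr c d = pr (a - c) (b - d) := by
  ext x
  rw [Finsupp.tsub_apply]
  fin_cases x <;> simp

lemma coeff_prM_mul (y : R2) (n : Fin 2 →₀ ℕ) :
    coeff n (monomial (pr 1 1) (1 : K) * y)
      = if pr 1 1 ≤ n then coeff (n - pr 1 1) y else 0 := by
  rw [coeff_monomial_mul]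
  simp only [one_mul]

lemma CXX (c : K) : MvPowerSeries.C c * MvPowerSeries.X 0 * MvPowerSeries.X 1
    = monomial (pr 1 1) c := by
  rw [C_mul_X, X_def, monomial_mul_monomial, mul_one]
  rfl

lemma one_sub_M_mul_G (j : ℕ) : (1 - monomial (pr 1 1) (w ^ j)) * G j = 1 := by
  apply MvPowerSeries.ext; intro n
  rw [sub_mul, one_mul, map_sub, coeff_monomial_mul, coeff_one, coeff_G]
  by_cases hd : n 0 = n 1
  · by_cases h0 : n = 0
    · subst h0
      rw [if_pos rfl, if_pos (by simp : ((0 : Fin 2 →₀ ℕ)) 0 = ((0 : Fin 2 →₀ ℕ)) 1)]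
      rw [if_neg]
      · simp
      · intro hle
        exact absurd (pr_le_iff.mp hle).1 (by simp)
    · have hn0 : 1 ≤ n 0 := by
        rcases Nat.eq_zero_or_pos (n 0) with hz | hp
        · exact absurd (eq_zero_of_apply hz (by rw [← hd]; exact hz)) h0
        · exact hp
      have hn1 : 1 ≤ n 1 := hd ▸ hn0
      rw [if_pos hd, if_pos (pr_le_iff.mpr ⟨hn0, hn1⟩), if_neg h0, coeff_G]
      have hsub0 : (n - pr 1 1) 0 = n 0 - 1 := by rw [Finsupp.tsub_apply]; simp
      have hsub1 : (n - pr 1 1) 1 = n 1 - 1 := by rw [Finsupp.tsub_apply]; simp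
      rw [hsub0, hsub1, if_pos (by omega), ← pow_add]
      rw [show j + j * (n 0 - 1) = j * n 0 by
        obtain ⟨m, hm⟩ : ∃ m, n 0 = m + 1 := ⟨n 0 - 1, by omega⟩
        rw [hm, Nat.add_sub_cancel]; ring]
      ring
  · have h0 : n ≠ 0 := fun h => hd (by subst h; simp)
    rw [if_neg hd, if_neg h0]
    by_cases hle : pr 1 1 ≤ n
    · rw [if_pos hle, coeff_G]
      have hsub0 : (n - pr 1 1) 0 = n 0 - 1 := by rw [Finsupp.tsub_apply]; simp
      have hsub1 : (n - pr 1 1) 1 = n 1 - 1 := by rw [Finsupp.tsub_apply]; simp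
      have h1 := (pr_le_iff.mp hle).1
      have h2 := (pr_le_iff.mp hle).2
      rw [hsub0, hsub1, if_neg (by omega)]
      simp
    · rw [if_neg hle]; simp

lemma G_inv (j : ℕ) :
    (1 - MvPowerSeries.C (uL ^ (2 * j)) * MvPowerSeries.X 0 * MvPowerSeries.X 1)⁻¹
      = G j := by
  have hc : (constantCoeff : R2 →+* K)
      (1 - MvPowerSeries.C (uL ^ (2 * j)) * MvPowerSeries.X 0 * MvPowerSeries.X 1)
      ≠ 0 := by
    rw [← coeff_zero_eq_constantCoeff_apply, map_sub, CXX, coeff_one, if_pos rfl, coeff_monomial]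
    rw [if_neg]
    · simp
    · intro h
      have := (pr_eq_iff.mp h.symm).1
      simp at this
  rw [MvPowerSeries.inv_eq_iff_mul_eq_one hc]
  rw [CXX, show uL ^ (2 * j) = w ^ j from (w_pow j).symm, mul_comm]
  exact one_sub_M_mul_G j

lemma PA_fixed2 : PA - monomial (pr 1 1) (1 : K) * PA = sig 0 PA := by
  have h : (1 - monomial (pr 1 1) (1 : K)) * PA
      = ((1 - monomial (pr 1 1) (1 : K)) * G 0) * sig 0 PA := by
    conv_lhs => rw [PA_fixed]
    ring
  have h2 : (1 - monomial (pr 1 1) (1 : K)) * G 0 = 1 := by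
    have := one_sub_M_mul_G 0
    rwa [pow_zero] at this
  rw [h2, one_mul] at h
  rw [← h]; ring

lemma h_rec (a : ℕ) :
    coeff (pr (a + 1) (a + 1)) PA * (1 - w ^ (a + 1)) = coeff (pr a a) PA := by
  have h := congrArg (fun φ => coeff (pr (a + 1) (a + 1)) φ) PA_fixed2
  rw [map_sub, coeff_prM_mul, if_pos (pr_le_iff.mpr ⟨by simp, by simp⟩), pr_sub_pr,
    coeff_sig, pr_apply0] at h
  norm_num at h
  linear_combination h

lemma h_formula (a : ℕ) : coeff (pr a a) PA = (pochInv a)⁻¹ := by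
  induction a with
  | zero => rw [pr_zero, coeff_zero_PA, pochInv_zero, inv_one]
  | succ a ih =>
    have hrec := h_rec a
    rw [ih] at hrec
    have hd : (1 : K) - w ^ (a + 1) ≠ 0 := by
      rw [w_pow]; exact one_sub_uL_pow_ne (by omega)
    have heq : coeff (pr (a + 1) (a + 1)) PA = (pochInv a)⁻¹ / (1 - w ^ (a + 1)) := by
      rw [eq_div_iff hd]; exact hrec
    rw [heq, pochInv_succ, w_pow, mul_inv, div_eq_mul_inv]

lemma eq_single_of_os (s : Fin 2) {n : Fin 2 →₀ ℕ} (h : n (os s) = 0) :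
    n = Finsupp.single s (n s) := by
  fin_cases s
  · have h1 : n 1 = 0 := by simpa [os] using h
    exact fin2_ext (by simp) (by simp [Finsupp.single_apply, h1])
  · have h1 : n 0 = 0 := by simpa [os] using h
    exact fin2_ext (by simp [Finsupp.single_apply, h1]) (by simp)

lemma coeff_PB (s : Fin 2) (n : Fin 2 →₀ ℕ) :
    coeff n (PB s) = if n (os s) = 0
      then (-1) ^ (n s) * uL ^ (n s * n s) * (pochInv (n s))⁻¹ else 0 := by
  split_ifs with h
  · conv_lhs => rw [eq_single_of_os s h]
    rw [pb_formula]
  · exact SuppB_PB s n h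

lemma coeff_PA (n : Fin 2 →₀ ℕ) :
    coeff n PA = if n 0 = n 1 then (pochInv (n 0))⁻¹ else 0 := by
  split_ifs with h
  · conv_lhs => rw [← pr_eta n, ← h]
    rw [h_formula]
  · exact SuppD_PA n h

end C2Aux
end Part5

section Part6
namespace C2Aux
open Finset

/-- Gaussian binomial as an element of `K`. -/
noncomputable def gb (a m : ℕ) : K :=
  if m ≤ a then pochInv a / (pochInv m * pochInv (a - m)) else 0

lemma gb_zero (a : ℕ) : gb a 0 = 1 := by
  rw [gb, if_pos (Nat.zero_le a), pochInv_zero, Nat.sub_zero, one_mul,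
    div_self (pochInv_ne a)]

lemma gb_self (a : ℕ) : gb a a = 1 := by
  rw [gb, if_pos le_rfl, Nat.sub_self, pochInv_zero, mul_one, div_self (pochInv_ne a)]

lemma gb_of_gt {a m : ℕ} (h : a < m) : gb a m = 0 := by
  rw [gb, if_neg (by omega)]

lemma gb_pascal (a m : ℕ) : gb (a + 1) (m + 1) = w ^ (m + 1) * gb a (m + 1) + gb a m := by
  rcases lt_or_ge a m with h | h
  · rw [gb_of_gt (by omega), gb_of_gt (by omega), gb_of_gt (by omega)]; ring
  · obtain ⟨p, rfl⟩ : ∃ p, a = m + p := ⟨a - m, by omega⟩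
    cases p with
    | zero =>
      simp only [Nat.add_zero]
      rw [gb_self, gb_of_gt (by omega), gb_self]; ring
    | succ p =>
      rw [gb, if_pos (by omega), gb, if_pos (by omega), gb, if_pos (by omega)]
      rw [show m + (p + 1) + 1 - (m + 1) = p + 1 from by omega,
        show m + (p + 1) - (m + 1) = p from by omega,
        show m + (p + 1) - m = p + 1 from by omega,
        show m + (p + 1) + 1 = (m + p + 1) + 1 from by omega,
        show m + (p + 1) = (m + p) + 1 from by omega]
      rw [pochInv_succ (m + p + 1), pochInv_succ (m + p), pochInv_succ m, pochInv_succ p,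
        w_pow]
      have h1 := pochInv_ne (m + p)
      have h2 := pochInv_ne m
      have h3 := pochInv_ne p
      have h4 := one_sub_uL_pow_ne (k := 2 * (m + p + 1 + 1)) (by omega)
      have h5 := one_sub_uL_pow_ne (k := 2 * (m + p + 1)) (by omega)
      have h6 := one_sub_uL_pow_ne (k := 2 * (m + 1)) (by omega)
      have h7 := one_sub_uL_pow_ne (k := 2 * (p + 1)) (by omega)
      field_simp
      ring
    
lemma gb_mul_poch (b i : ℕ) (h : i ≤ b) :
    gb (b + 1) (i + 1) * pochInv (i + 1) = (1 - w ^ (b + 1)) * (gb b i * pochInv i) := by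
  obtain ⟨q, rfl⟩ : ∃ q, b = i + q := ⟨b - i, by omega⟩
  rw [gb, if_pos (by omega), gb, if_pos (by omega),
    show i + q + 1 - (i + 1) = q from by omega, show i + q - i = q from by omega,
    show i + q + 1 = (i + q) + 1 from rfl, pochInv_succ (i + q), pochInv_succ i, w_pow]
  have h1 := pochInv_ne (i + q)
  have h2 := pochInv_ne i
  have h3 := pochInv_ne q
  have h4 := one_sub_uL_pow_ne (k := 2 * (i + q + 1)) (by omega)
  have h5 := one_sub_uL_pow_ne (k := 2 * (i + 1)) (by omega)
  field_simp

/-- summand of the key identity -/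
noncomputable def tT (a b m : ℕ) : K := w ^ ((a - m) * (b - m)) * gb a m * gb b m * pochInv m

/-- the key sum -/
noncomputable def Tsum (a b : ℕ) : K := ∑ m ∈ Finset.range (min a b + 1), tT a b m

lemma Tsum_a0 (b : ℕ) : Tsum 0 b = 1 := by
  rw [Tsum, show min 0 b + 1 = 1 from by omega, Finset.sum_range_one, tT, gb_zero, gb_zero,
    pochInv_zero]
  simp

lemma Tsum_b0 (a : ℕ) : Tsum a 0 = 1 := by
  rw [Tsum, show min a 0 + 1 = 1 from by omega, Finset.sum_range_one, tT, gb_zero, gb_zero,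
    pochInv_zero]
  simp

lemma tT_split (a b : ℕ) : ∀ i ∈ Finset.range (min a b + 1),
    tT (a + 1) (b + 1) (i + 1)
      = w ^ (b + 1) * tT a (b + 1) (i + 1) + (1 - w ^ (b + 1)) * tT a b i := by
  intro i hi
  rw [Finset.mem_range] at hi
  have hib : i ≤ b := by omega
  have hia : i ≤ a := by omega
  obtain ⟨p, rfl⟩ : ∃ p, a = i + p := ⟨a - i, by omega⟩
  obtain ⟨q, rfl⟩ : ∃ q, b = i + q := ⟨b - i, by omega⟩
  have hbP := gb_mul_poch (i + q) i (by omega)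
  rw [tT, tT, tT]
  cases p with
  | zero =>
    simp only [Nat.add_zero]
    rw [show i + 1 - (i + 1) = 0 from by omega,
      show i + q + 1 - (i + 1) = q from by omega,
      show i - i = 0 from by omega, show i + q - i = q from by omega,
      gb_self, gb_self, gb_of_gt (show i < i + 1 from by omega)]
    linear_combination hbP
  | succ p =>
    rw [show i + (p + 1) + 1 - (i + 1) = p + 1 from by omega,
      show i + q + 1 - (i + 1) = q from by omega,
      show i + (p + 1) - (i + 1) = p from by omega,
      show i + (p + 1) - i = p + 1 from by omega,
      show i + q - i = q from by omega]
    rw [gb_pascal (i + (p + 1)) i]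
    linear_combination (w ^ ((p + 1) * q) * (w ^ (i + 1) * gb (i + (p + 1)) (i + 1)
      + gb (i + (p + 1)) i)
      - w ^ (i + q + 1) * w ^ (p * q) * gb (i + (p + 1)) (i + 1)) * hbP
  
lemma Tsum_rec (a b : ℕ) :
    Tsum (a + 1) (b + 1) = w ^ (b + 1) * Tsum a (b + 1) + (1 - w ^ (b + 1)) * Tsum a b := by
  rw [Tsum, show min (a + 1) (b + 1) + 1 = (min a b + 1) + 1 from by omega,
    Finset.sum_range_succ', Finset.sum_congr rfl (tT_split a b), Finset.sum_add_distrib,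
    ← Finset.mul_sum, ← Finset.mul_sum]
  have ht0 : tT (a + 1) (b + 1) 0 = w ^ (b + 1) * tT a (b + 1) 0 := by
    rw [tT, tT, gb_zero, gb_zero, gb_zero, pochInv_zero]
    simp only [Nat.sub_zero, mul_one]
    rw [← pow_add]
    congr 1
    ring
  rw [ht0]
  have hT : w ^ (b + 1) * Tsum a (b + 1)
      = w ^ (b + 1) * ((∑ i ∈ Finset.range (min a (b + 1)), tT a (b + 1) (i + 1))
          + tT a (b + 1) 0) := by
    rw [Tsum, Finset.sum_range_succ']
  rw [hT]
  have hS : ∑ i ∈ Finset.range (min a b + 1), tT a (b + 1) (i + 1)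
      = ∑ i ∈ Finset.range (min a (b + 1)), tT a (b + 1) (i + 1) := by
    rcases le_or_gt a b with hab | hab
    · rw [show min a b = a from by omega, show min a (b + 1) = a from by omega,
        Finset.sum_range_succ]
      have hz : tT a (b + 1) (a + 1) = 0 := by
        rw [tT, gb_of_gt (by omega)]; ring
      rw [hz, add_zero]
    · rw [show min a b + 1 = min a (b + 1) from by omega]
  rw [hS, Tsum]
  ring

lemma Tsum_one : ∀ a b, Tsum a b = 1 := by
  intro a
  induction a with
  | zero => exact Tsum_a0
  | succ a ih =>
    intro b
    cases b with
    | zero => exact Tsum_b0 _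
    | succ b => rw [Tsum_rec, ih, ih]; ring

end C2Aux
end Part6

section Part7
namespace C2Aux
open Filter MvPowerSeries Finsupp

lemma os0 : os 0 = 1 := rfl
lemma os1 : os 1 = 0 := rfl

/-- the LHS coefficient -/
noncomputable def cLHS (a b : ℕ) : K :=
  (-qh) ^ (-(((a : ℤ) - (b : ℤ)) ^ 2)) / (pochInv a * pochInv b)

/-- integer square exponent as a natural number -/
noncomputable def Dn (a b : ℕ) : ℕ := Int.toNat (((a : ℤ) - (b : ℤ)) ^ 2)

lemma Dn_add (a b : ℕ) : Dn a b + 2 * (a * b) = a * a + b * b := by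
  have h := Int.toNat_of_nonneg (sq_nonneg (((a : ℤ) - (b : ℤ))))
  have h2 : ((Dn a b : ℤ) + 2 * ((a : ℤ) * (b : ℤ))) = (a : ℤ) * a + (b : ℤ) * b := by
    rw [Dn, h]; ring
  exact_mod_cast h2

lemma Dn_shift (m a b : ℕ) : Dn (m + a) (m + b) = Dn a b := by
  rw [Dn, Dn]
  congr 1
  push_cast
  ring

lemma neg_one_pow_sq (c : ℕ) : ((-1 : K)) ^ (c * c) = (-1) ^ c := by
  rcases Nat.even_or_odd c with h | h
  · rw [Even.neg_one_pow (α := K) (h.mul_left c), Even.neg_one_pow (α := K) h]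
  · rw [Odd.neg_one_pow (α := K) (h.mul h), Odd.neg_one_pow (α := K) h]

lemma neg_one_pow_Dn (a b : ℕ) : ((-1 : K)) ^ (Dn a b) = (-1) ^ (a + b) := by
  have h1 : ((-1 : K)) ^ (Dn a b) = (-1) ^ (Dn a b) * (-1) ^ (2 * (a * b)) := by
    rw [Even.neg_one_pow (α := K) (even_two_mul _), mul_one]
  rw [h1, ← pow_add, Dn_add, pow_add, neg_one_pow_sq, neg_one_pow_sq, ← pow_add]

lemma cLHS_eq (a b : ℕ) :
    cLHS a b = ((-1) ^ (a + b) * uL ^ (Dn a b)) * ((pochInv a)⁻¹ * (pochInv b)⁻¹) := by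
  rw [cLHS, div_eq_mul_inv, mul_inv]
  congr 1
  have hq : (-qh) = (-uL)⁻¹ := by
    rw [qh]; exact (inv_neg (a := uL)).symm
  rw [hq, zpow_neg, inv_zpow, inv_inv]
  rw [show (((a : ℤ) - (b : ℤ)) ^ 2) = ((Dn a b : ℤ)) from
    (Int.toNat_of_nonneg (sq_nonneg _)).symm, zpow_natCast,
    show (-uL) ^ (Dn a b) = (-1) ^ (Dn a b) * uL ^ (Dn a b) from neg_pow uL (Dn a b),
    neg_one_pow_Dn]

lemma term_eq (a b m : ℕ) (hma : m ≤ a) (hmb : m ≤ b) :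
    cLHS a b * tT a b m
      = (pochInv m)⁻¹ * (((-1) ^ (a - m) * uL ^ ((a - m) * (a - m)) * (pochInv (a - m))⁻¹)
          * ((-1) ^ (b - m) * uL ^ ((b - m) * (b - m)) * (pochInv (b - m))⁻¹)) := by
  obtain ⟨a', rfl⟩ : ∃ a', a = m + a' := ⟨a - m, by omega⟩
  obtain ⟨b', rfl⟩ : ∃ b', b = m + b' := ⟨b - m, by omega⟩
  rw [show m + a' - m = a' from by omega, show m + b' - m = b' from by omega]
  rw [cLHS_eq, tT, gb, if_pos (by omega), gb, if_pos (by omega),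
    show m + a' - m = a' from by omega, show m + b' - m = b' from by omega, Dn_shift]
  have hUD : uL ^ (Dn a' b') = uL ^ (a' * a') * uL ^ (b' * b') * (w ^ (a' * b'))⁻¹ := by
    rw [eq_mul_inv_iff_mul_eq₀ (pow_ne_zero _ (by rw [w]; exact pow_ne_zero _ uL_ne_zero)),
      w_pow, ← pow_add, ← pow_add]
    congr 1
    have := Dn_add a' b'
    omega
  have hsign : ((-1 : K)) ^ (m + a' + (m + b')) = (-1) ^ a' * (-1) ^ b' := by
    rw [show m + a' + (m + b') = a' + b' + 2 * m from by ring, pow_add, pow_mul,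
      show ((-1 : K)) ^ 2 = 1 from by ring, one_pow, mul_one, pow_add]
  rw [hUD, hsign]
  have h1 := pochInv_ne m
  have h2 := pochInv_ne a'
  have h3 := pochInv_ne b'
  have h4 := pochInv_ne (m + a')
  have h5 := pochInv_ne (m + b')
  have h6 : w ^ (a' * b') ≠ 0 := pow_ne_zero _ (by rw [w]; exact pow_ne_zero _ uL_ne_zero)
  field_simp

/-- the target coefficient function -/
noncomputable def Phi : R2 := fun n => cLHS (n 0) (n 1)

lemma term_eq_monomial (d : ℕ × ℕ) :
    MvPowerSeries.C (cLHS d.1 d.2) * MvPowerSeries.X 0 ^ d.1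
        * MvPowerSeries.X 1 ^ d.2
      = monomial (pr d.1 d.2) (cLHS d.1 d.2) := by
  rw [X_pow_eq, X_pow_eq, ← smul_eq_C_mul, ← map_smul, smul_eq_mul, mul_one,
    monomial_mul_monomial, mul_one]
  rfl

lemma hasSum_LHS :
    HasSum (fun d : ℕ × ℕ => monomial (pr d.1 d.2) (cLHS d.1 d.2) : (ℕ × ℕ) → R2) Phi := by
  classical
  apply Pi.hasSum.mpr
  intro n
  have hfun : (fun d : ℕ × ℕ => (monomial (pr d.1 d.2) (cLHS d.1 d.2) : R2) n)
      = fun d : ℕ × ℕ => if d = (n 0, n 1) then cLHS (n 0) (n 1) else 0 := by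
    funext d
    show coeff n (monomial (pr d.1 d.2) (cLHS d.1 d.2)) = _
    rw [coeff_monomial]
    by_cases h : d = (n 0, n 1)
    · subst h
      rw [if_pos (pr_eta n).symm, if_pos rfl]
    · rw [if_neg, if_neg h]
      intro hc
      obtain ⟨h1, h2⟩ := pr_eq_iff.mp hc.symm
      exact h (Prod.ext h1 h2)
  rw [hfun]
  exact hasSum_ite_eq (n 0, n 1) _

lemma coeff_PB0_PB1 (n : Fin 2 →₀ ℕ) :
    coeff n (PB 0 * PB 1)
      = ((-1) ^ (n 0) * uL ^ (n 0 * n 0) * (pochInv (n 0))⁻¹)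
        * ((-1) ^ (n 1) * uL ^ (n 1 * n 1) * (pochInv (n 1))⁻¹) := by
  classical
  rw [coeff_mul]
  rw [Finset.sum_eq_single (Finsupp.single 0 (n 0), Finsupp.single 1 (n 1))]
  · rw [coeff_PB, coeff_PB, os0, os1]
    rw [if_pos (Finsupp.single_eq_of_ne' (by decide : (0 : Fin 2) ≠ 1)),
      if_pos (Finsupp.single_eq_of_ne' (by decide : (1 : Fin 2) ≠ 0)),
      Finsupp.single_eq_same, Finsupp.single_eq_same]
  · intro p hp hne
    rw [Finset.HasAntidiagonal.mem_antidiagonal] at hp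
    by_cases h1 : p.1 1 = 0
    · by_cases h2 : p.2 0 = 0
      · exfalso
        apply hne
        have e1 : p.1 = Finsupp.single 0 (p.1 0) := eq_single_of_os 0 (by rwa [os0])
        have e2 : p.2 = Finsupp.single 1 (p.2 1) := eq_single_of_os 1 (by rwa [os1])
        have hn0 : p.1 0 + p.2 0 = n 0 := by rw [← hp, Finsupp.add_apply]
        have hn1 : p.1 1 + p.2 1 = n 1 := by rw [← hp, Finsupp.add_apply]
        have hv0 : p.1 0 = n 0 := by omega
        have hv1 : p.2 1 = n 1 := by omega
        rw [Prod.ext_iff]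
        exact ⟨by rw [e1, hv0], by rw [e2, hv1]⟩
      · rw [coeff_PB 1, os1, if_neg h2, mul_zero]
    · rw [coeff_PB 0, os0, if_neg h1, zero_mul]
  · intro hmem
    exact absurd (Finset.HasAntidiagonal.mem_antidiagonal.mpr (pr_eta n)) hmem

lemma coeff_triple (n : Fin 2 →₀ ℕ) :
    coeff n (PA * (PB 0 * PB 1))
      = ∑ m ∈ Finset.range (min (n 0) (n 1) + 1), (pochInv m)⁻¹
          * (((-1) ^ (n 0 - m) * uL ^ ((n 0 - m) * (n 0 - m)) * (pochInv (n 0 - m))⁻¹)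
            * ((-1) ^ (n 1 - m) * uL ^ ((n 1 - m) * (n 1 - m)) * (pochInv (n 1 - m))⁻¹)) := by
  classical
  rw [coeff_mul]
  rw [← Finset.sum_filter_of_ne (p := fun p : (Fin 2 →₀ ℕ) × (Fin 2 →₀ ℕ) => p.1 0 = p.1 1)
    (by
      intro p hp hne
      by_contra hc
      exact hne (by rw [coeff_PA, if_neg hc, zero_mul]))]
  refine Finset.sum_nbij' (fun p => p.1 0) (fun m => (pr m m, n - pr m m)) ?_ ?_ ?_ ?_ ?_
  · intro p hp
    rw [Finset.mem_filter, Finset.HasAntidiagonal.mem_antidiagonal] at hp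
    obtain ⟨hsum, hdiag⟩ := hp
    have hn0 : p.1 0 + p.2 0 = n 0 := by rw [← hsum, Finsupp.add_apply]
    have hn1 : p.1 1 + p.2 1 = n 1 := by rw [← hsum, Finsupp.add_apply]
    rw [Finset.mem_range]
    omega
  · intro m hm
    rw [Finset.mem_range] at hm
    rw [Finset.mem_filter, Finset.HasAntidiagonal.mem_antidiagonal]
    constructor
    · exact add_tsub_cancel_of_le (pr_le_iff.mpr ⟨by omega, by omega⟩)
    · simp
  · intro p hp
    rw [Finset.mem_filter, Finset.HasAntidiagonal.mem_antidiagonal] at hp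
    obtain ⟨hsum, hdiag⟩ := hp
    have e1 : pr (p.1 0) (p.1 0) = p.1 := by
      apply fin2_ext
      · simp
      · simp [hdiag]
    rw [Prod.ext_iff]
    refine ⟨e1, ?_⟩
    dsimp only
    rw [e1, ← hsum, add_tsub_cancel_left]
  · intro m hm
    simp
  · intro p hp
    rw [Finset.mem_filter, Finset.HasAntidiagonal.mem_antidiagonal] at hp
    obtain ⟨hsum, hdiag⟩ := hp
    have hn0 : p.1 0 + p.2 0 = n 0 := by rw [← hsum, Finsupp.add_apply]
    have hn1 : p.1 1 + p.2 1 = n 1 := by rw [← hsum, Finsupp.add_apply]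
    rw [coeff_PA, if_pos hdiag, coeff_PB0_PB1]
    have e2 : p.2 0 = n 0 - p.1 0 := by omega
    have e3 : p.2 1 = n 1 - p.1 0 := by omega
    rw [e2, e3]

lemma coeff_RHS (n : Fin 2 →₀ ℕ) :
    coeff n (PA * (PB 0 * PB 1)) = cLHS (n 0) (n 1) := by
  rw [coeff_triple]
  have h1 : cLHS (n 0) (n 1) = cLHS (n 0) (n 1) * Tsum (n 0) (n 1) := by
    rw [Tsum_one]; ring
  rw [h1, Tsum, Finset.mul_sum]
  apply Finset.sum_congr rfl
  intro m hm
  rw [Finset.mem_range] at hm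
  exact (term_eq (n 0) (n 1) m (by omega) (by omega)).symm

end C2Aux
end Part7


open C2Aux

/-- The generating series of the cyclic quiver `C₂`:
`∑_{(d₁,d₂) ∈ ℕ²} (-q^{1/2})^{-(d₁-d₂)²} / ((q⁻¹;q⁻¹)_{d₁} (q⁻¹;q⁻¹)_{d₂}) t₁^{d₁} t₂^{d₂}`
equals `Exp(q t₁t₂/(q-1)) · Exp(-q^{1/2} t₁/(q-1)) · Exp(-q^{1/2} t₂/(q-1))`, where the
plethystic exponentials expand as the infinite products
`∏_{j≥0} (1 - q^{-j} t₁t₂)⁻¹`, `∏_{j≥0} (1 - q^{-1/2-j} t₁)` and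
`∏_{j≥0} (1 - q^{-1/2-j} t₂)`. -/
theorem C2_generating_series :
    (∑' d : ℕ × ℕ,
      (MvPowerSeries.C : LaurentSeries ℚ →+* MvPowerSeries (Fin 2) (LaurentSeries ℚ))
          ((-qh) ^ (-(((d.1 : ℤ) - (d.2 : ℤ)) ^ 2)) / (pochInv d.1 * pochInv d.2)) *
        (MvPowerSeries.X 0 : MvPowerSeries (Fin 2) (LaurentSeries ℚ)) ^ d.1 *
        (MvPowerSeries.X 1 : MvPowerSeries (Fin 2) (LaurentSeries ℚ)) ^ d.2)
    = (∏' j : ℕ, (1 - (MvPowerSeries.C : LaurentSeries ℚ →+* MvPowerSeries (Fin 2) (LaurentSeries ℚ)) (uL ^ (2 * j)) *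
          MvPowerSeries.X 0 * MvPowerSeries.X 1)⁻¹) *
      (∏' j : ℕ, (1 - (MvPowerSeries.C : LaurentSeries ℚ →+* MvPowerSeries (Fin 2) (LaurentSeries ℚ)) (uL ^ (2 * j + 1)) *
          MvPowerSeries.X 0)) *
      (∏' j : ℕ, (1 - (MvPowerSeries.C : LaurentSeries ℚ →+* MvPowerSeries (Fin 2) (LaurentSeries ℚ)) (uL ^ (2 * j + 1)) *
          MvPowerSeries.X 1)) := by
  classical
  have hA : (∏' j : ℕ, (1 - (MvPowerSeries.C : LaurentSeries ℚ →+* MvPowerSeries (Fin 2) (LaurentSeries ℚ)) (uL ^ (2 * j)) *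
        MvPowerSeries.X 0 * MvPowerSeries.X 1)⁻¹) = PA := by
    rw [tprod_congr G_inv]
    exact hasProd_G.tprod_eq
  have hB0 : (∏' j : ℕ, (1 - (MvPowerSeries.C : LaurentSeries ℚ →+* MvPowerSeries (Fin 2) (LaurentSeries ℚ)) (uL ^ (2 * j + 1)) *
        MvPowerSeries.X 0)) = PB 0 := (hasProd_FB 0).tprod_eq
  have hB1 : (∏' j : ℕ, (1 - (MvPowerSeries.C : LaurentSeries ℚ →+* MvPowerSeries (Fin 2) (LaurentSeries ℚ)) (uL ^ (2 * j + 1)) *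
        MvPowerSeries.X 1)) = PB 1 := (hasProd_FB 1).tprod_eq
  have hL : (∑' d : ℕ × ℕ,
      (MvPowerSeries.C : LaurentSeries ℚ →+* MvPowerSeries (Fin 2) (LaurentSeries ℚ))
          ((-qh) ^ (-(((d.1 : ℤ) - (d.2 : ℤ)) ^ 2)) / (pochInv d.1 * pochInv d.2)) *
        (MvPowerSeries.X 0 : MvPowerSeries (Fin 2) (LaurentSeries ℚ)) ^ d.1 *
        (MvPowerSeries.X 1 : MvPowerSeries (Fin 2) (LaurentSeries ℚ)) ^ d.2) = Phi := by
    exact (tsum_congr (fun d : ℕ × ℕ => term_eq_monomial d)).trans hasSum_LHS.tsum_eq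
  rw [hA, hB0, hB1, hL, mul_assoc]
  apply MvPowerSeries.ext
  intro n
  rw [coeff_RHS n]
  rfl
end

section
/- For the quiver Q'' of type D̂_r with vertices 0,…,r (arrows 0→2, 1→2, 2→3, …, r-3→r-2, r-2→r-1, r-2→r), the linear map τ on ℤ^{r+1} defined as the negative inverse Coxeter-type transformation (induced by the Auslander–Reiten translation) satisfies: τ(e₂)=e₃, τ(e₃)=e₄, …, τ(e_{r-3})=e_{r-2}, τ(e_{r-2})=ρ, τ(ρ)=e₂, τ(e_{r-1})=-ρ+e_r, τ(e_r)=-ρ+e_{r-1}, τ(e₀)=e₁+e₂, τ(e₁)=e₀+e₂, where ρ = e₀+e₁+⋯+e_r. -/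
/-- Dimension vector of the indecomposable projective `P i` over the `D̂_r` quiver with
arrows `0→2, 1→2, 2→3, …, (r-3)→(r-2), (r-2)→(r-1), (r-2)→r`:
`(dim P i) j` is the number of paths from `i` to `j`. -/
def dimP (r : ℕ) (i j : Fin (r + 1)) : ℤ :=
  if i = j then 1
  else if i.val ≤ 1 then (if 2 ≤ j.val then 1 else 0)
  else if i.val ≤ r - 2 ∧ i.val ≤ j.val then 1 else 0

/-- Dimension vector of the indecomposable injective `I i` over the `D̂_r` quiver:
`(dim I i) j` is the number of paths from `j` to `i`. -/
def dimI (r : ℕ) (i j : Fin (r + 1)) : ℤ :=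
  if i = j then 1
  else if i.val ≤ 1 then 0
  else if i.val ≤ r - 2 then (if j.val ≤ i.val then 1 else 0)
  else (if j.val ≤ r - 2 then 1 else 0)

/-- The standard basis vector `e k` of `ℤ^{r+1}`. -/
def eV (r k : ℕ) : Fin (r + 1) → ℤ := fun j => if j.val = k then 1 else 0

/-- `ρ = e₀ + e₁ + ⋯ + e_r`. -/
def rhoV (r : ℕ) : Fin (r + 1) → ℤ := fun _ => 1

/-- A linear map `τ` on `ℤ^{r+1}` is the Auslander–Reiten translation (on the level of
the Grothendieck group) iff `τ (dim P i) = - dim I i` for every vertex `i`. -/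
def IsARTranslate (r : ℕ) (τ : (Fin (r + 1) → ℤ) →ₗ[ℤ] (Fin (r + 1) → ℤ)) : Prop :=
  ∀ i, τ (fun j => dimP r i j) = fun j => -dimI r i j

set_option maxHeartbeats 4000000 in
/-- Explicit description of the AR translation `τ` of the `D̂_r` quiver on the
Grothendieck group `ℤ^{r+1}` (`r ≥ 4`). -/
theorem ar_translate_formulas (r : ℕ) (hr : 4 ≤ r)
    (τ : (Fin (r + 1) → ℤ) →ₗ[ℤ] (Fin (r + 1) → ℤ)) (hτ : IsARTranslate r τ) :
    (∀ k : ℕ, 2 ≤ k → k ≤ r - 3 → τ (eV r k) = eV r (k + 1)) ∧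
    τ (eV r (r - 2)) = rhoV r ∧
    τ (rhoV r) = eV r 2 ∧
    τ (eV r (r - 1)) = -rhoV r + eV r r ∧
    τ (eV r r) = -rhoV r + eV r (r - 1) ∧
    τ (eV r 0) = eV r 1 + eV r 2 ∧
    τ (eV r 1) = eV r 0 + eV r 2 := by
  classical
  refine ⟨?_, ?_, ?_, ?_, ?_, ?_, ?_⟩
  · intro k h2 h3
    have hk : k < r + 1 := by omega
    have hk1 : k + 1 < r + 1 := by omega
    have heq : eV r k
        = (fun j => dimP r ⟨k, hk⟩ j) - (fun j => dimP r ⟨k + 1, hk1⟩ j) := by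
      funext j
      simp only [eV, dimP, Pi.sub_apply, Fin.ext_iff, Fin.val_mk]
      split_ifs <;> omega
    rw [heq, map_sub, hτ ⟨k, hk⟩, hτ ⟨k + 1, hk1⟩]
    funext j
    simp only [eV, dimI, Pi.sub_apply, Fin.ext_iff, Fin.val_mk]
    split_ifs <;> omega
  · have h2 : r - 2 < r + 1 := by omega
    have h1 : r - 1 < r + 1 := by omega
    have h0 : r < r + 1 := by omega
    have heq : eV r (r - 2)
        = (fun j => dimP r ⟨r - 2, h2⟩ j) - (fun j => dimP r ⟨r - 1, h1⟩ j)
          - (fun j => dimP r ⟨r, h0⟩ j) := by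
      funext j
      simp only [eV, dimP, Pi.sub_apply, Fin.ext_iff, Fin.val_mk]
      split_ifs <;> omega
    rw [heq, map_sub, map_sub, hτ ⟨r - 2, h2⟩, hτ ⟨r - 1, h1⟩, hτ ⟨r, h0⟩]
    funext j
    simp only [rhoV, dimI, Pi.sub_apply, Fin.ext_iff, Fin.val_mk]
    split_ifs <;> omega
  · have h0 : 0 < r + 1 := by omega
    have h1 : 1 < r + 1 := by omega
    have h2 : 2 < r + 1 := by omega
    have heq : rhoV r
        = (fun j => dimP r ⟨0, h0⟩ j) + (fun j => dimP r ⟨1, h1⟩ j)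
          - (fun j => dimP r ⟨2, h2⟩ j) := by
      funext j
      simp only [rhoV, dimP, Pi.sub_apply, Pi.add_apply, Fin.ext_iff, Fin.val_mk]
      split_ifs <;> omega
    rw [heq, map_sub, map_add, hτ ⟨0, h0⟩, hτ ⟨1, h1⟩, hτ ⟨2, h2⟩]
    funext j
    simp only [eV, dimI, Pi.sub_apply, Pi.add_apply, Fin.ext_iff, Fin.val_mk]
    split_ifs <;> omega
  · have h1 : r - 1 < r + 1 := by omega
    have heq : eV r (r - 1) = (fun j => dimP r ⟨r - 1, h1⟩ j) := by
      funext j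
      simp only [eV, dimP, Fin.ext_iff, Fin.val_mk]
      split_ifs <;> omega
    rw [heq, hτ ⟨r - 1, h1⟩]
    funext j
    simp only [eV, rhoV, dimI, Pi.add_apply, Pi.neg_apply, Fin.ext_iff, Fin.val_mk]
    split_ifs <;> omega
  · have h0 : r < r + 1 := by omega
    have heq : eV r r = (fun j => dimP r ⟨r, h0⟩ j) := by
      funext j
      simp only [eV, dimP, Fin.ext_iff, Fin.val_mk]
      split_ifs <;> omega
    rw [heq, hτ ⟨r, h0⟩]
    funext j
    simp only [eV, rhoV, dimI, Pi.add_apply, Pi.neg_apply, Fin.ext_iff, Fin.val_mk]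
    split_ifs <;> omega
  · have h0 : 0 < r + 1 := by omega
    have h2 : 2 < r + 1 := by omega
    have heq : eV r 0
        = (fun j => dimP r ⟨0, h0⟩ j) - (fun j => dimP r ⟨2, h2⟩ j) := by
      funext j
      simp only [eV, dimP, Pi.sub_apply, Fin.ext_iff, Fin.val_mk]
      split_ifs <;> omega
    rw [heq, map_sub, hτ ⟨0, h0⟩, hτ ⟨2, h2⟩]
    funext j
    simp only [eV, dimI, Pi.sub_apply, Pi.add_apply, Fin.ext_iff, Fin.val_mk]
    split_ifs <;> omega
  · have h1 : 1 < r + 1 := by omega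
    have h2 : 2 < r + 1 := by omega
    have heq : eV r 1
        = (fun j => dimP r ⟨1, h1⟩ j) - (fun j => dimP r ⟨2, h2⟩ j) := by
      funext j
      simp only [eV, dimP, Pi.sub_apply, Fin.ext_iff, Fin.val_mk]
      split_ifs <;> omega
    rw [heq, map_sub, hτ ⟨1, h1⟩, hτ ⟨2, h2⟩]
    funext j
    simp only [eV, dimI, Pi.sub_apply, Pi.add_apply, Fin.ext_iff, Fin.val_mk]
    split_ifs <;> omega
end

section
/- For the D̂_r quiver, the Euler form satisfies χ(d, e) - χ(d, Σe) = s(d,e), where s is the Euler form of the disjoint union of two 2-cycle quivers on the vertex pairs {0,1} and {r-1,r}: s(d,e) = d₀e₀ + d₁e₁ + d_{r-1}e_{r-1} + d_r e_r - d₀e₁ - d₁e₀ - d_{r-1}e_r - d_r e_{r-1}. -/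
open Fin.NatCast

/-- The Euler form of the `D̂_r` quiver with arrows
`0→2, 1→2, 2→3, …, (r-3)→(r-2), (r-2)→(r-1), (r-2)→r`:
`χ(d,e) = ∑_i d_i e_i - ∑_{a : i→j} d_i e_j`. -/
def chiV (r : ℕ) (d e : Fin (r + 1) → ℤ) : ℤ :=
  ∑ i, d i * e i -
    (d 0 * e 2 + d 1 * e 2 +
      (∑ k ∈ Finset.Icc 2 (r - 3), d (k : Fin (r + 1)) * e ((k + 1 : ℕ) : Fin (r + 1))) +
      d ((r - 2 : ℕ) : Fin (r + 1)) * e ((r - 1 : ℕ) : Fin (r + 1)) +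
      d ((r - 2 : ℕ) : Fin (r + 1)) * e ((r : ℕ) : Fin (r + 1)))

/-- The involution `Σ` of `ℤ^{r+1}` swapping coordinates `0 ↔ 1` and `(r-1) ↔ r` and
fixing the others. -/
def SigmaV (r : ℕ) (d : Fin (r + 1) → ℤ) : Fin (r + 1) → ℤ :=
  fun j => d (((if j.val = 0 then 1 else if j.val = 1 then 0
    else if j.val = r - 1 then r else if j.val = r then r - 1 else j.val : ℕ)) : Fin (r + 1))

/-- `χ(d,e) - χ(d,Σe) = s(d,e)`, where `s` is the Euler form of the disjoint union of
two 2-cycle quivers on the vertex pairs `{0,1}` and `{r-1,r}`. -/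
theorem chi_sub_chi_sigma (r : ℕ) (hr : 4 ≤ r) (d e : Fin (r + 1) → ℤ) :
    chiV r d e - chiV r d (SigmaV r e) =
      d 0 * e 0 + d 1 * e 1 +
        d ((r - 1 : ℕ) : Fin (r + 1)) * e ((r - 1 : ℕ) : Fin (r + 1)) +
        d ((r : ℕ) : Fin (r + 1)) * e ((r : ℕ) : Fin (r + 1)) -
        d 0 * e 1 - d 1 * e 0 -
        d ((r - 1 : ℕ) : Fin (r + 1)) * e ((r : ℕ) : Fin (r + 1)) -
        d ((r : ℕ) : Fin (r + 1)) * e ((r - 1 : ℕ) : Fin (r + 1)) := by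
  have hv : ∀ n : ℕ, n ≤ r → (((n : ℕ) : Fin (r+1)) : ℕ) = n :=
    fun n hn => Fin.val_cast_of_lt (by omega)
  have key : ∀ n : ℕ, n ≤ r → SigmaV r e ((n : ℕ) : Fin (r+1)) =
      e (((if n = 0 then 1 else if n = 1 then 0 else if n = r-1 then r
        else if n = r then r-1 else n : ℕ)) : Fin (r+1)) := by
    intro n hn
    simp only [SigmaV, hv n hn]
  have h0 : (0 : Fin (r+1)) = ((0:ℕ) : Fin (r+1)) := by simp
  have h1 : (1 : Fin (r+1)) = ((1:ℕ) : Fin (r+1)) := by simp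
  have h2 : (2 : Fin (r+1)) = ((2:ℕ) : Fin (r+1)) := by simp
  have s0 : SigmaV r e 0 = e 1 := by
    rw [h0, key 0 (by omega), if_pos rfl, ← h1]
  have s1 : SigmaV r e 1 = e 0 := by
    rw [h1, key 1 (by omega), if_neg (by omega), if_pos rfl, ← h0]
  have sa : SigmaV r e ((r-1 : ℕ) : Fin (r+1)) = e ((r:ℕ) : Fin (r+1)) := by
    rw [key (r-1) (by omega), if_neg (by omega), if_neg (by omega), if_pos rfl]
  have sb : SigmaV r e ((r : ℕ) : Fin (r+1)) = e ((r-1:ℕ) : Fin (r+1)) := by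
    rw [key r le_rfl, if_neg (by omega), if_neg (by omega), if_neg (by omega), if_pos rfl]
  have sfix : ∀ n : ℕ, 2 ≤ n → n ≤ r - 2 →
      SigmaV r e ((n:ℕ) : Fin (r+1)) = e ((n:ℕ) : Fin (r+1)) := by
    intro n h2n hn
    rw [key n (by omega), if_neg (by omega), if_neg (by omega), if_neg (by omega),
      if_neg (by omega)]
  have s2 : SigmaV r e 2 = e 2 := by
    rw [h2, sfix 2 le_rfl (by omega)]
  -- arrow middle sum unchanged
  have hIcc : ∑ k ∈ Finset.Icc 2 (r - 3), d (k : Fin (r + 1)) *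
        SigmaV r e ((k + 1 : ℕ) : Fin (r + 1)) =
      ∑ k ∈ Finset.Icc 2 (r - 3), d (k : Fin (r + 1)) * e ((k + 1 : ℕ) : Fin (r + 1)) := by
    refine Finset.sum_congr rfl ?_
    intro k hk
    rw [Finset.mem_Icc] at hk
    rw [sfix (k+1) (by omega) (by omega)]
  -- the diagonal part
  set a : Fin (r+1) := ((r-1:ℕ) : Fin (r+1)) with ha
  set b : Fin (r+1) := ((r:ℕ) : Fin (r+1)) with hb
  have hav : (a : ℕ) = r - 1 := hv (r-1) (by omega)
  have hbv : (b : ℕ) = r := hv r le_rfl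
  have hne : ∀ x y : Fin (r+1), (x:ℕ) ≠ (y:ℕ) → x ≠ y := by
    intro x y h hxy; exact h (by rw [hxy])
  have hS : ∑ i, (d i * e i - d i * SigmaV r e i) =
      ∑ i ∈ ({0, 1, a, b} : Finset (Fin (r+1))), (d i * e i - d i * SigmaV r e i) := by
    refine (Finset.sum_subset (Finset.subset_univ _) ?_).symm
    intro i _ hi
    simp only [Finset.mem_insert, Finset.mem_singleton, not_or] at hi
    obtain ⟨hi0, hi1, hia, hib⟩ := hi
    have hv0 : (i : ℕ) ≠ 0 := fun h => hi0 (Fin.ext (by simpa using h))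
    have hv1 : (i : ℕ) ≠ 1 := fun h =>
      hi1 (by rw [h1]; exact Fin.ext (by rw [hv 1 (by omega)]; exact h))
    have hva : (i : ℕ) ≠ r - 1 := fun h => hia (Fin.ext (by rw [h, hav]))
    have hvb : (i : ℕ) ≠ r := fun h => hib (Fin.ext (by rw [h, hbv]))
    have : SigmaV r e i = e i := by
      conv_lhs => rw [← Fin.cast_val_eq_self i]
      rw [key i (by omega), if_neg hv0, if_neg hv1, if_neg hva, if_neg hvb,
        Fin.cast_val_eq_self]
    rw [this, sub_self]
  have h01 : (0 : Fin (r+1)) ≠ 1 := by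
    apply hne; rw [Fin.val_zero, h1, hv 1 (by omega)]; omega
  have h0a : (0 : Fin (r+1)) ≠ a := by apply hne; rw [hav, Fin.val_zero]; omega
  have h0b : (0 : Fin (r+1)) ≠ b := by apply hne; rw [hbv, Fin.val_zero]; omega
  have h1a : (1 : Fin (r+1)) ≠ a := by
    apply hne; rw [hav, h1, hv 1 (by omega)]; omega
  have h1b : (1 : Fin (r+1)) ≠ b := by
    apply hne; rw [hbv, h1, hv 1 (by omega)]; omega
  have hab : a ≠ b := by apply hne; rw [hav, hbv]; omega
  have hdiag : ∑ i, d i * e i - ∑ i, d i * SigmaV r e i =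
      d 0 * e 0 + d 1 * e 1 + d a * e a + d b * e b -
        d 0 * e 1 - d 1 * e 0 - d a * e b - d b * e a := by
    rw [← Finset.sum_sub_distrib, hS]
    rw [Finset.sum_insert (by simp [h01, h0a, h0b]),
      Finset.sum_insert (by simp [h1a, h1b]),
      Finset.sum_insert (by simp [hab]), Finset.sum_singleton]
    rw [s0, s1, sa, sb]
    ring
  unfold chiV
  rw [s2, hIcc, sa, sb]
  linear_combination hdiag
end
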